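/- Let Ω be a Polish space, P a Borel probability measure on Ω, ν a finite signed Borel measure with ν ≪ P, and φ: Ω × ℝ → ℝ a jointly measurable function such that φ(ω,·) is convex and finite, E_P[φ(·,x)⁺] < ∞ for all x ∈ ℝ, and there exists ζ ∈ L¹(P) with E_P[φ*(·,ζ)⁺] < ∞. Then sup over bounded continuous f of (∫ f dν − E_P[φ(·,f)]) equals sup over essentially bounded Borel ξ of (∫ ξ dν − E_P[φ(·,ξ)]). -/

import Mathlib

open MeasureTheory Filter Topology
open scoped ENNReal

theorem stmt_8 {Ω : Type*} [TopologicalSpace Ω] [PolishSpace Ω]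
    [MeasurableSpace Ω] [BorelSpace Ω]
    (P : Measure Ω) [IsProbabilityMeasure P]
    (ν : SignedMeasure Ω) (hν : ν ≪ᵥ P.toENNRealVectorMeasure)
    (φ : Ω → ℝ → ℝ)
    (hφmeas : Measurable (Function.uncurry φ))
    (hconv : ∀ ω, ConvexOn ℝ Set.univ (φ ω))
    (hplus : ∀ x : ℝ, Integrable (fun ω => max (φ ω x) 0) P)
    (ζ : Ω → ℝ) (hζ : Integrable ζ P)
    (hζstar : (∫⁻ ω, ⨆ x : ℝ, ENNReal.ofReal (x * ζ ω - φ ω x) ∂P) < ⊤) :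
    (⨆ f : BoundedContinuousFunction Ω ℝ,
        ((∫ ω, f ω * ν.rnDeriv P ω ∂P - ∫ ω, φ ω (f ω) ∂P : ℝ) : EReal)) =
    (⨆ ξ : {ξ : Ω → ℝ // Measurable ξ ∧ ∃ C : ℝ, ∀ᵐ ω ∂P, |ξ ω| ≤ C},
        ((∫ ω, (ξ : Ω → ℝ) ω * ν.rnDeriv P ω ∂P
          - ∫ ω, φ ω ((ξ : Ω → ℝ) ω) ∂P : ℝ) : EReal)) := by
  classical
  have hρm : Measurable (ν.rnDeriv P) := SignedMeasure.measurable_rnDeriv ν P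
  have hρint : Integrable (ν.rnDeriv P) P := SignedMeasure.integrable_rnDeriv ν P
  have hφcont : ∀ ω, Continuous (φ ω) := fun ω => (hconv ω).locallyLipschitz.continuous
  -- measurable representative of ζ
  obtain ⟨ζm, hζm_meas, hζm_ae⟩ : ∃ z : Ω → ℝ, Measurable z ∧ ζ =ᵐ[P] z :=
    ⟨hζ.1.mk ζ, hζ.1.stronglyMeasurable_mk.measurable, hζ.1.ae_eq_mk⟩
  have hζm_int : Integrable ζm P := hζ.congr hζm_ae
  -- the countable-sup envelope H
  set H : Ω → ℝ≥0∞ := fun ω => ⨆ q : ℚ, ENNReal.ofReal ((q : ℝ) * ζm ω - φ ω (q : ℝ)) with hHdef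
  have hφx : ∀ x : ℝ, Measurable fun ω => φ ω x := fun x =>
    hφmeas.comp (measurable_id.prodMk measurable_const)
  have hHm : Measurable H := by
    refine Measurable.iSup fun q => ?_
    exact ENNReal.measurable_ofReal.comp ((hζm_meas.const_mul _).sub (hφx _))
  have hHle : ∀ (ω : Ω) (x : ℝ), ENNReal.ofReal (x * ζm ω - φ ω x) ≤ H ω := by
    intro ω x
    have hx : x ∈ closure (Set.range ((↑) : ℚ → ℝ)) := by
      rw [Rat.denseRange_cast.closure_eq]; trivial
    obtain ⟨u, hu, hux⟩ := mem_closure_iff_seq_limit.mp hx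
    choose q hq using hu
    have hqx : Tendsto (fun n => (q n : ℝ)) atTop (𝓝 x) := by
      simpa only [hq] using hux
    have hT : Tendsto (fun n => ENNReal.ofReal ((q n : ℝ) * ζm ω - φ ω (q n)))
        atTop (𝓝 (ENNReal.ofReal (x * ζm ω - φ ω x))) := by
      refine (ENNReal.continuous_ofReal.tendsto _).comp ?_
      exact (hqx.mul tendsto_const_nhds).sub (((hφcont ω).tendsto x).comp hqx)
    exact le_of_tendsto hT (Eventually.of_forall fun n =>
      le_iSup (fun r : ℚ => ENNReal.ofReal ((r : ℝ) * ζm ω - φ ω (r : ℝ))) (q n))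
  have hHfin : ∫⁻ ω, H ω ∂P < ⊤ := by
    refine lt_of_le_of_lt ?_ hζstar
    have : ∀ᵐ ω ∂P, H ω ≤ ⨆ x : ℝ, ENNReal.ofReal (x * ζ ω - φ ω x) := by
      filter_upwards [hζm_ae] with ω hω
      refine iSup_le fun q => ?_
      rw [← hω]
      exact le_iSup (fun x : ℝ => ENNReal.ofReal (x * ζ ω - φ ω x)) (q : ℝ)
    exact lintegral_mono_ae this
  have hHint : Integrable (fun ω => (H ω).toReal) P :=
    integrable_toReal_of_lintegral_ne_top hHm.aemeasurable hHfin.ne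
  have hHae : ∀ᵐ ω ∂P, H ω ≠ ⊤ := (ae_lt_top hHm hHfin.ne).mono fun ω h => h.ne
  refine le_antisymm (iSup_le fun f => ?_) (iSup_le fun ξ0 => ?_)
  · exact le_iSup_of_le ⟨fun ω => f ω, f.continuous.measurable, ‖f‖,
      ae_of_all _ fun ω => by simpa [Real.norm_eq_abs] using f.norm_coe_le_norm ω⟩ le_rfl
  obtain ⟨ξ, hξm, C, hCae⟩ := ξ0
  have hC0 : 0 ≤ C := by
    obtain ⟨ω, hω⟩ := hCae.exists
    exact (abs_nonneg _).trans hω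
  -- truncation
  set τ : ℝ → ℝ := fun t => max (-C) (min C t) with hτdef
  have hτcont : Continuous τ := continuous_const.max (continuous_const.min continuous_id)
  have hτbd : ∀ t, |τ t| ≤ C := fun t =>
    abs_le.mpr ⟨le_max_left _ _, max_le (neg_le_self hC0) (min_le_left _ _)⟩
  have hτid : ∀ t, |t| ≤ C → τ t = t := by
    intro t ht
    rcases abs_le.mp ht with ⟨h1, h2⟩
    simp [hτdef, min_eq_right h2, max_eq_right h1]
  set ξ' : Ω → ℝ := fun ω => τ (ξ ω) with hξ'def
  have hξ'm : Measurable ξ' := hτcont.measurable.comp hξm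
  have hξ'bd : ∀ ω, |ξ' ω| ≤ C := fun ω => hτbd _
  have hae : ξ =ᵐ[P] ξ' := hCae.mono fun ω h => (hτid _ h).symm
  -- the integrable envelope κ
  set κ : Ω → ℝ := fun ω =>
    max (φ ω C) 0 + max (φ ω (-C)) 0 + C * |ζm ω| + (H ω).toReal with hκdef
  have hκint : Integrable κ P :=
    (((hplus C).add (hplus (-C))).add (hζm_int.abs.const_mul C)).add hHint
  have hdom : ∀ᵐ ω ∂P, ∀ x : ℝ, |x| ≤ C → |φ ω x| ≤ κ ω := by
    filter_upwards [hHae] with ω hH ω'x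
    intro hx
    rcases abs_le.mp hx with ⟨hx1, hx2⟩
    have hmem : ω'x ∈ segment ℝ (-C) C := by
      rw [segment_eq_Icc (neg_le_self hC0)]
      exact ⟨hx1, hx2⟩
    have hup : φ ω ω'x ≤ max (φ ω (-C)) (φ ω C) :=
      (hconv ω).le_on_segment (Set.mem_univ _) (Set.mem_univ _) hmem
    have hlo : ω'x * ζm ω - φ ω ω'x ≤ (H ω).toReal :=
      (ENNReal.ofReal_le_iff_le_toReal hH).mp (hHle ω ω'x)
    have habs : |ω'x * ζm ω| ≤ C * |ζm ω| := by
      rw [abs_mul]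
      exact mul_le_mul_of_nonneg_right hx (abs_nonneg _)
    have h1 : 0 ≤ max (φ ω C) 0 := le_max_right _ _
    have h2 : 0 ≤ max (φ ω (-C)) 0 := le_max_right _ _
    have h3 : φ ω (-C) ≤ max (φ ω (-C)) 0 := le_max_left _ _
    have h4 : φ ω C ≤ max (φ ω C) 0 := le_max_left _ _
    have h5 : 0 ≤ C * |ζm ω| := mul_nonneg hC0 (abs_nonneg _)
    have h6 : 0 ≤ (H ω).toReal := ENNReal.toReal_nonneg
    have hκeq : κ ω = max (φ ω C) 0 + max (φ ω (-C)) 0 + C * |ζm ω| + (H ω).toReal := rfl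
    rw [abs_le, hκeq]
    constructor
    · nlinarith [neg_abs_le (ω'x * ζm ω)]
    · rcases le_max_iff.mp hup with h | h <;> nlinarith
  have keyMeas : ∀ g : Ω → ℝ, Measurable g →
      AEStronglyMeasurable (fun ω => φ ω (g ω)) P := fun g hg =>
    (hφmeas.comp (measurable_id.prodMk hg)).aestronglyMeasurable
  -- approximate ξ' in L¹ by bounded continuous functions
  haveI : P.WeaklyRegular := inferInstance
  letI := TopologicalSpace.upgradeIsCompletelyMetrizable Ω
  have hξ'int : Integrable ξ' P := by
    refine Integrable.mono' (integrable_const C) hξ'm.aestronglyMeasurable ?_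
    exact ae_of_all _ fun ω => by simpa [Real.norm_eq_abs] using hξ'bd ω
  have hmem : MemLp ξ' 1 P := memLp_one_iff_integrable.mpr hξ'int
  have happrox : ∀ n : ℕ, ∃ g : BoundedContinuousFunction Ω ℝ,
      eLpNorm (ξ' - (g : Ω → ℝ)) 1 P ≤ ((n : ℝ≥0∞))⁻¹ := by
    intro n
    rcases eq_or_ne (n : ℝ≥0∞)⁻¹ 0 with h | h
    · exfalso
      exact (ENNReal.inv_ne_zero.mpr (ENNReal.natCast_ne_top n)) h
    obtain ⟨g, hg, -⟩ := hmem.exists_boundedContinuous_eLpNorm_sub_le ENNReal.one_ne_top h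
    exact ⟨g, hg⟩
  choose f hf using happrox
  have htm : TendstoInMeasure P (fun n => (f n : Ω → ℝ)) atTop ξ' := by
    refine tendstoInMeasure_of_tendsto_eLpNorm (p := 1) one_ne_zero
      (fun n => (f n).continuous.aestronglyMeasurable) hξ'm.aestronglyMeasurable ?_
    refine tendsto_of_tendsto_of_tendsto_of_le_of_le tendsto_const_nhds
      ENNReal.tendsto_inv_nat_nhds_zero (fun n => zero_le) (fun n => ?_)
    rw [eLpNorm_sub_comm]
    exact hf n
  obtain ⟨ns, hns_mono, hns_ae⟩ := htm.exists_seq_tendsto_ae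
  -- clamped continuous approximations
  set g : ℕ → BoundedContinuousFunction Ω ℝ := fun i =>
    BoundedContinuousFunction.ofNormedAddCommGroup (fun ω => τ (f (ns i) ω))
      (hτcont.comp (f (ns i)).continuous) C
      (fun ω => by simpa [Real.norm_eq_abs] using hτbd (f (ns i) ω)) with hgdef
  have hgcoe : ∀ i ω, (g i) ω = τ (f (ns i) ω) := fun i ω => rfl
  have hgbd : ∀ i ω, |(g i) ω| ≤ C := fun i ω => hτbd _
  have hgconv : ∀ᵐ ω ∂P, Tendsto (fun i => (g i) ω) atTop (𝓝 (ξ' ω)) := by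
    filter_upwards [hns_ae] with ω hω
    have : Tendsto (fun i => τ (f (ns i) ω)) atTop (𝓝 (τ (ξ' ω))) :=
      (hτcont.tendsto _).comp hω
    rw [hτid _ (hξ'bd ω)] at this
    exact this
  -- convergence of the two integrals
  have hInt1 : Tendsto (fun i => ∫ ω, (g i) ω * ν.rnDeriv P ω ∂P) atTop
      (𝓝 (∫ ω, ξ' ω * ν.rnDeriv P ω ∂P)) := by
    refine tendsto_integral_of_dominated_convergence (fun ω => C * |ν.rnDeriv P ω|)
      (fun i => ((g i).continuous.measurable.mul hρm).aestronglyMeasurable)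
      (hρint.abs.const_mul C) (fun i => ae_of_all _ fun ω => ?_) ?_
    · rw [Real.norm_eq_abs, abs_mul]
      exact mul_le_mul_of_nonneg_right (hgbd i ω) (abs_nonneg _)
    · exact hgconv.mono fun ω h => h.mul tendsto_const_nhds
  have hInt2 : Tendsto (fun i => ∫ ω, φ ω ((g i) ω) ∂P) atTop
      (𝓝 (∫ ω, φ ω (ξ' ω) ∂P)) := by
    refine tendsto_integral_of_dominated_convergence κ
      (fun i => keyMeas _ (g i).continuous.measurable) hκint
      (fun i => ?_) ?_
    · filter_upwards [hdom] with ω h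
      simpa [Real.norm_eq_abs] using h ((g i) ω) (hgbd i ω)
    · filter_upwards [hgconv] with ω h
      exact ((hφcont ω).tendsto (ξ' ω)).comp h
  have hlim : Tendsto
      (fun i => ((∫ ω, (g i) ω * ν.rnDeriv P ω ∂P - ∫ ω, φ ω ((g i) ω) ∂P : ℝ) : EReal))
      atTop (𝓝 ((∫ ω, ξ' ω * ν.rnDeriv P ω ∂P - ∫ ω, φ ω (ξ' ω) ∂P : ℝ) : EReal)) :=
    (continuous_coe_real_ereal.tendsto _).comp (hInt1.sub hInt2)
  have hval1 : ∫ ω, ξ ω * ν.rnDeriv P ω ∂P = ∫ ω, ξ' ω * ν.rnDeriv P ω ∂P :=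
    integral_congr_ae (hae.mono fun ω h => by simp only [h])
  have hval2 : ∫ ω, φ ω (ξ ω) ∂P = ∫ ω, φ ω (ξ' ω) ∂P :=
    integral_congr_ae (hae.mono fun ω h => by simp only [h])
  show ((∫ ω, ξ ω * ν.rnDeriv P ω ∂P - ∫ ω, φ ω (ξ ω) ∂P : ℝ) : EReal) ≤ _
  rw [hval1, hval2]
  exact le_of_tendsto hlim (Eventually.of_forall fun i =>
    le_iSup (fun f : BoundedContinuousFunction Ω ℝ =>
      ((∫ ω, f ω * ν.rnDeriv P ω ∂P - ∫ ω, φ ω (f ω) ∂P : ℝ) : EReal)) (g i))
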